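/- For every graph H there exist an independent set I, a matching M, and a family Γ of pairwise vertex-disjoint triangles, all pairwise vertex-disjoint from each other, such that V(H) = I ∪ V(M) ∪ V(Γ), and there is a partition V(M) = V_1 ∪ V_2 such that every edge of M has one endpoint in V_1 and one in V_2, and every neighbour of every vertex of I lies in V_1. -/

import Mathlib

open scoped Classical

namespace MTDaux

variable {V : Type*} [Fintype V]

abbrev Pm (a : V) (p : V × V) : Prop := a = p.1 ∨ a = p.2

def Valid (H : SimpleGraph V) (P : Finset (V × V)) : Prop :=
  (∀ p ∈ P, H.Adj p.1 p.2) ∧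
  ∀ p ∈ P, ∀ q ∈ P, p ≠ q → ∀ a, Pm a p → Pm a q → False

def Cov (P : Finset (V × V)) : Set V := {v | ∃ p ∈ P, Pm v p}

lemma exists_max (H : SimpleGraph V) :
    ∃ P, Valid H P ∧ ∀ Q, Valid H Q → Q.card ≤ P.card := by
  classical
  have hne : (Finset.univ.filter (fun P : Finset (V × V) => Valid H P)).Nonempty := by
    refine ⟨∅, ?_⟩
    simp [Valid]
  obtain ⟨P, hP, hmax⟩ := Finset.exists_max_image _ Finset.card hne
  simp only [Finset.mem_filter, Finset.mem_univ, true_and] at hP hmax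
  exact ⟨P, hP, fun Q hQ => hmax Q hQ⟩

lemma core (H : SimpleGraph V) :
    ∃ (I : Set V) (P : Finset (V × V)) (Γ : Finset (Finset V)),
      (∀ p ∈ P, H.Adj p.1 p.2) ∧
      (∀ p ∈ P, ∀ q ∈ P, p ≠ q → ∀ a, Pm a p → Pm a q → False) ∧
      (∀ x ∈ I, ∀ y ∈ I, x ≠ y → ¬H.Adj x y) ∧
      (∀ s ∈ Γ, s.card = 3 ∧ ∀ u ∈ s, ∀ v ∈ s, u ≠ v → H.Adj u v) ∧
      (∀ s ∈ Γ, ∀ s' ∈ Γ, s ≠ s' → Disjoint s s') ∧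
      (∀ s ∈ Γ, ∀ a ∈ s, a ∉ Cov P ∧ a ∉ I) ∧
      (∀ a ∈ I, a ∉ Cov P) ∧
      (∀ v : V, v ∈ I ∨ v ∈ Cov P ∨ ∃ s ∈ Γ, v ∈ s) ∧
      (∀ x ∈ I, ∀ y, H.Adj x y → ∃ p ∈ P, y = p.1) := by
  classical
  obtain ⟨P0, hP0, hmax⟩ := exists_max H
  obtain ⟨hadj, hdisj⟩ := hP0
  -- basic facts
  have hCov : ∀ {x : V}, x ∉ Cov P0 → ∀ q ∈ P0, ¬ Pm x q := by
    intro x hx q hq hm; exact hx ⟨q, hq, hm⟩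
  -- adding an edge between two uncovered vertices contradicts maximality
  have addC : ∀ x y : V, x ∉ Cov P0 → y ∉ Cov P0 → H.Adj x y → False := by
    intro x y hx hy hadjxy
    set Q := insert (x, y) P0 with hQ
    have hvalid : Valid H Q := by
      constructor
      · intro q hq
        rcases Finset.mem_insert.mp hq with rfl | hq0
        · exact hadjxy
        · exact hadj q hq0
      · intro q hq r hr hne a haq har
        rcases Finset.mem_insert.mp hq with rfl | hq0 <;>
          rcases Finset.mem_insert.mp hr with rfl | hr0
        · exact hne rfl
        · rcases haq with rfl | rfl
          · exact hCov hx r hr0 har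
          · exact hCov hy r hr0 har
        · rcases har with rfl | rfl
          · exact hCov hx q hq0 haq
          · exact hCov hy q hq0 haq
        · exact hdisj q hq0 r hr0 hne a haq har
    have hnotmem : (x, y) ∉ P0 := fun h => hx ⟨(x,y), h, Or.inl rfl⟩
    have := hmax Q hvalid
    rw [hQ, Finset.card_insert_of_notMem hnotmem] at this
    omega
  -- swapping: p ∈ P0, x ≠ y uncovered, y ~ p.1, x ~ p.2 contradicts maximality
  have swapC : ∀ p ∈ P0, ∀ x y : V, x ∉ Cov P0 → y ∉ Cov P0 → x ≠ y →
      H.Adj y p.1 → H.Adj x p.2 → False := by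
    intro p hp x y hx hy hxy h1 h2
    have hp12 : p.1 ≠ p.2 := (hadj p hp).ne
    set Q : Finset (V × V) := insert (p.2, x) (insert (p.1, y) (P0.erase p)) with hQ
    have hxp1 : x ≠ p.1 := fun h => hx ⟨p, hp, Or.inl h⟩
    have hxp2 : x ≠ p.2 := fun h => hx ⟨p, hp, Or.inr h⟩
    have hyp1 : y ≠ p.1 := fun h => hy ⟨p, hp, Or.inl h⟩
    have hyp2 : y ≠ p.2 := fun h => hy ⟨p, hp, Or.inr h⟩
    have hmemQ : ∀ q ∈ Q, q = (p.2, x) ∨ q = (p.1, y) ∨ (q ∈ P0 ∧ q ≠ p) := by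
      intro q hq
      rcases Finset.mem_insert.mp hq with h | hq'
      · exact Or.inl h
      rcases Finset.mem_insert.mp hq' with h | hq''
      · exact Or.inr (Or.inl h)
      · exact Or.inr (Or.inr ⟨Finset.mem_of_mem_erase hq'', Finset.ne_of_mem_erase hq''⟩)
    have hvalid : Valid H Q := by
      constructor
      · intro q hq
        rcases hmemQ q hq with rfl | rfl | ⟨hq0, _⟩
        · exact h2.symm
        · exact h1.symm
        · exact hadj q hq0
      · intro q hq r hr hne a haq har
        rcases hmemQ q hq with rfl | rfl | ⟨hq0, hqp⟩ <;>
          rcases hmemQ r hr with rfl | rfl | ⟨hr0, hrp⟩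
        · exact hne rfl
        · rcases haq with rfl | rfl
          · rcases har with h | h
            · exact hp12 h.symm
            · exact hyp2 h.symm
          · rcases har with h | h
            · exact hxp1 h
            · exact hxy h
        · rcases haq with rfl | rfl
          · exact hdisj p hp r hr0 (Ne.symm hrp) p.2 (Or.inr rfl) har
          · exact hCov hx r hr0 har
        · rcases haq with rfl | rfl
          · rcases har with h | h
            · exact hp12 h
            · exact hxp1 h.symm
          · rcases har with h | h
            · exact hyp2 h
            · exact hxy h.symm
        · exact hne rfl
        · rcases haq with rfl | rfl
          · exact hdisj p hp r hr0 (Ne.symm hrp) p.1 (Or.inl rfl) har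
          · exact hCov hy r hr0 har
        · rcases har with rfl | rfl
          · exact hdisj p hp q hq0 (Ne.symm hqp) p.2 (Or.inr rfl) haq
          · exact hCov hx q hq0 haq
        · rcases har with rfl | rfl
          · exact hdisj p hp q hq0 (Ne.symm hqp) p.1 (Or.inl rfl) haq
          · exact hCov hy q hq0 haq
        · exact hdisj q hq0 r hr0 hne a haq har
    have h1y : (p.1, y) ∉ P0.erase p := fun h =>
      hy ⟨(p.1, y), Finset.mem_of_mem_erase h, Or.inr rfl⟩
    have h2x : (p.2, x) ∉ insert (p.1, y) (P0.erase p) := by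
      intro h
      rcases Finset.mem_insert.mp h with h | h
      · exact hp12 (congrArg Prod.fst h).symm
      · exact hx ⟨(p.2, x), Finset.mem_of_mem_erase h, Or.inr rfl⟩
    have hcards : Q.card = P0.card + 1 := by
      rw [hQ, Finset.card_insert_of_notMem h2x, Finset.card_insert_of_notMem h1y,
        Finset.card_erase_of_mem hp]
      have : 1 ≤ P0.card := Finset.card_pos.mpr ⟨p, hp⟩
      omega
    have := hmax Q hvalid
    omega
  -- unique common neighbour for a "bad" edge
  have uniq : ∀ p ∈ P0, ∀ x : V, x ∉ Cov P0 → H.Adj x p.1 → H.Adj x p.2 →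
      ∀ z : V, z ∉ Cov P0 → (H.Adj z p.1 ∨ H.Adj z p.2) → z = x := by
    intro p hp x hx hx1 hx2 z hz hzadj
    by_contra hzx
    rcases hzadj with h1 | h2
    · exact swapC p hp x z hx hz (Ne.symm hzx) h1 hx2
    · exact swapC p hp z x hz hx hzx hx1 h2
  -- bad edges and their witnesses
  set Bad : Finset (V × V) :=
    P0.filter (fun p => ∃ x, x ∉ Cov P0 ∧ H.Adj x p.1 ∧ H.Adj x p.2) with hBadDef
  let w : V × V → V := fun p =>
    if h : ∃ x, x ∉ Cov P0 ∧ H.Adj x p.1 ∧ H.Adj x p.2 then h.choose else p.1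
  have hBadP0 : ∀ p ∈ Bad, p ∈ P0 := fun p hp => (Finset.mem_filter.mp hp).1
  have wspec : ∀ p ∈ Bad, w p ∉ Cov P0 ∧ H.Adj (w p) p.1 ∧ H.Adj (w p) p.2 := by
    intro p hp
    have h := (Finset.mem_filter.mp hp).2
    simp only [w, dif_pos h]
    exact h.choose_spec
  have memBad : ∀ p ∈ P0, ∀ x, x ∉ Cov P0 → H.Adj x p.1 → H.Adj x p.2 → p ∈ Bad := by
    intro p hp x hx h1 h2
    exact Finset.mem_filter.mpr ⟨hp, ⟨x, hx, h1, h2⟩⟩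
  set X : Finset V := Bad.image w with hXdef
  let e : V → V × V := fun x => if h : ∃ p ∈ Bad, w p = x then h.choose else (x, x)
  have espec : ∀ x ∈ X, e x ∈ Bad ∧ w (e x) = x := by
    intro x hx
    obtain ⟨p, hp, hw⟩ := Finset.mem_image.mp hx
    have h : ∃ p ∈ Bad, w p = x := ⟨p, hp, hw⟩
    simp only [e, dif_pos h]
    exact ⟨h.choose_spec.1, h.choose_spec.2⟩
  have tri : ∀ x ∈ X, (e x) ∈ P0 ∧ x ∉ Cov P0 ∧ H.Adj x (e x).1 ∧ H.Adj x (e x).2 ∧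
      H.Adj (e x).1 (e x).2 := by
    intro x hx
    obtain ⟨hBadmem, hw⟩ := espec x hx
    have hp0 := hBadP0 _ hBadmem
    have hws := wspec _ hBadmem
    rw [hw] at hws
    exact ⟨hp0, hws.1, hws.2.1, hws.2.2, hadj _ hp0⟩
  set P1 : Finset (V × V) := P0 \ X.image e with hP1def
  have hP1sub : ∀ p ∈ P1, p ∈ P0 := fun p hp => (Finset.mem_sdiff.mp hp).1
  set I1 : Set V := {v | v ∉ Cov P0 ∧ v ∉ X} with hI1def
  have covP1sub : ∀ v, v ∈ Cov P1 → v ∈ Cov P0 := by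
    rintro v ⟨p, hp, hm⟩
    exact ⟨p, hP1sub p hp, hm⟩
  have remC : ∀ x ∈ X, ∀ a, Pm a (e x) → a ∉ Cov P1 := by
    rintro x hx a hma ⟨q, hq, hmq⟩
    have hqne : q ≠ e x := by
      intro h
      exact (Finset.mem_sdiff.mp hq).2 (h ▸ Finset.mem_image.mpr ⟨x, hx, rfl⟩)
    exact hdisj q (hP1sub q hq) (e x) (tri x hx).1 hqne a hmq hma
  -- key orientation lemma
  have KO : ∀ p ∈ P1, ∀ x, x ∈ I1 → ∀ y, y ∈ I1 → H.Adj x p.1 → H.Adj y p.2 → False := by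
    intro p hp x hxI y hyI h1 h2
    by_cases hxy : x = y
    · subst hxy
      have hpBad : p ∈ Bad := memBad p (hP1sub p hp) x hxI.1 h1 h2
      have hws := wspec p hpBad
      have hxw : x = w p :=
        uniq p (hP1sub p hp) (w p) hws.1 hws.2.1 hws.2.2 x hxI.1 (Or.inl h1)
      refine hxI.2 ?_
      rw [hxw]
      exact Finset.mem_image.mpr ⟨p, hpBad, rfl⟩
    · exact swapC p (hP1sub p hp) y x hyI.1 hxI.1 (Ne.symm hxy) h1 h2
  -- orientation
  let f : V × V → V × V := fun p => if ∃ z, z ∈ I1 ∧ H.Adj z p.2 then (p.2, p.1) else p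
  set P2 : Finset (V × V) := P1.image f with hP2def
  have hPmf : ∀ (a : V) (p : V × V), Pm a (f p) ↔ Pm a p := by
    intro a p
    by_cases h : ∃ z, z ∈ I1 ∧ H.Adj z p.2
    · simp only [f, if_pos h, Pm]
      exact or_comm
    · simp only [f, if_neg h]
  have covP2P1 : ∀ v, v ∈ Cov P2 → v ∈ Cov P1 := by
    rintro v ⟨q, hq, hm⟩
    obtain ⟨p, hp, rfl⟩ := Finset.mem_image.mp hq
    exact ⟨p, hp, (hPmf v p).mp hm⟩
  have hadj2 : ∀ q ∈ P2, H.Adj q.1 q.2 := by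
    intro q hq
    obtain ⟨p, hp, rfl⟩ := Finset.mem_image.mp hq
    have := hadj p (hP1sub p hp)
    by_cases h : ∃ z, z ∈ I1 ∧ H.Adj z p.2
    · simp only [f, if_pos h]
      exact this.symm
    · simp only [f, if_neg h]
      exact this
  have hdisj2 : ∀ q ∈ P2, ∀ r ∈ P2, q ≠ r → ∀ a, Pm a q → Pm a r → False := by
    intro q hq r hr hne a haq har
    obtain ⟨p, hp, rfl⟩ := Finset.mem_image.mp hq
    obtain ⟨p', hp', rfl⟩ := Finset.mem_image.mp hr
    have hpp' : p ≠ p' := by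
      intro h
      exact hne (by rw [h])
    exact hdisj p (hP1sub p hp) p' (hP1sub p' hp')
      hpp' a ((hPmf a p).mp haq) ((hPmf a p').mp har)
  have hsndfree : ∀ q ∈ P2, ∀ x, x ∈ I1 → ¬ H.Adj x q.2 := by
    intro q hq x hx hadjx
    obtain ⟨p, hp, rfl⟩ := Finset.mem_image.mp hq
    by_cases h : ∃ z, z ∈ I1 ∧ H.Adj z p.2
    · obtain ⟨z, hz1, hz2⟩ := h
      simp only [f, if_pos (⟨z, hz1, hz2⟩ : ∃ z, z ∈ I1 ∧ H.Adj z p.2)] at hadjx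
      exact KO p hp x hx z hz1 hadjx hz2
    · simp only [f, if_neg h] at hadjx
      exact h ⟨x, hx, hadjx⟩
  -- assemble
  refine ⟨I1, P2, X.image (fun x => ({x, (e x).1, (e x).2} : Finset V)),
    hadj2, hdisj2, ?_, ?_, ?_, ?_, ?_, ?_, ?_⟩
  · -- independence
    intro x hx y hy _ hadjxy
    exact addC x y hx.1 hy.1 hadjxy
  · -- triangles
    intro s hs
    obtain ⟨x, hx, rfl⟩ := Finset.mem_image.mp hs
    obtain ⟨hp0, hxc, h1, h2, h12⟩ := tri x hx
    have hx1 : x ≠ (e x).1 := h1.ne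
    have hx2 : x ≠ (e x).2 := h2.ne
    have h12' : (e x).1 ≠ (e x).2 := h12.ne
    constructor
    · rw [Finset.card_insert_of_notMem (by simp [hx1, hx2]),
        Finset.card_insert_of_notMem (by simp [h12']), Finset.card_singleton]
    · intro u hu v hv hne
      simp only [Finset.mem_insert, Finset.mem_singleton] at hu hv
      rcases hu with rfl | rfl | rfl <;> rcases hv with rfl | rfl | rfl <;>
        first
          | exact absurd rfl hne
          | exact h1 | exact h2 | exact h12
          | exact h1.symm | exact h2.symm | exact h12.symm
  · -- pairwise disjoint triangles
    intro s hs s' hs' hne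
    obtain ⟨x, hx, rfl⟩ := Finset.mem_image.mp hs
    obtain ⟨x', hx', rfl⟩ := Finset.mem_image.mp hs'
    obtain ⟨hp0, hxc, h1, h2, h12⟩ := tri x hx
    obtain ⟨hp0', hxc', h1', h2', h12'⟩ := tri x' hx'
    have hxx' : x ≠ x' := by
      intro h
      exact hne (by rw [h])
    have hee : e x ≠ e x' := by
      intro h
      exact hxx' (by rw [← (espec x hx).2, ← (espec x' hx').2, h])
    rw [Finset.disjoint_left]
    intro a ha ha'
    simp only [Finset.mem_insert, Finset.mem_singleton] at ha ha'
    rcases ha with rfl | rfl | rfl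
    · rcases ha' with h | h | h
      · exact hxx' h
      · exact hCov hxc (e x') hp0' (Or.inl h)
      · exact hCov hxc (e x') hp0' (Or.inr h)
    · rcases ha' with h | h | h
      · exact hCov hxc' (e x) hp0 (Or.inl h.symm)
      · exact hdisj (e x) hp0 (e x') hp0' hee _ (Or.inl rfl) (Or.inl h)
      · exact hdisj (e x) hp0 (e x') hp0' hee _ (Or.inl rfl) (Or.inr h)
    · rcases ha' with h | h | h
      · exact hCov hxc' (e x) hp0 (Or.inr h.symm)
      · exact hdisj (e x) hp0 (e x') hp0' hee _ (Or.inr rfl) (Or.inl h)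
      · exact hdisj (e x) hp0 (e x') hp0' hee _ (Or.inr rfl) (Or.inr h)
  · -- triangles avoid Cov P2 and I1
    intro s hs a ha
    obtain ⟨x, hx, rfl⟩ := Finset.mem_image.mp hs
    obtain ⟨hp0, hxc, h1, h2, h12⟩ := tri x hx
    simp only [Finset.mem_insert, Finset.mem_singleton] at ha
    rcases ha with rfl | rfl | rfl
    · exact ⟨fun h => hxc (covP1sub _ (covP2P1 _ h)), fun h => h.2 hx⟩
    · exact ⟨fun h => remC x hx _ (Or.inl rfl) (covP2P1 _ h),
        fun h => h.1 ⟨e x, hp0, Or.inl rfl⟩⟩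
    · exact ⟨fun h => remC x hx _ (Or.inr rfl) (covP2P1 _ h),
        fun h => h.1 ⟨e x, hp0, Or.inr rfl⟩⟩
  · -- I1 avoids Cov P2
    intro a ha h
    exact ha.1 (covP1sub _ (covP2P1 _ h))
  · -- cover
    intro v
    by_cases hv : v ∈ Cov P0
    · obtain ⟨p, hp, hm⟩ := hv
      by_cases hrem : p ∈ X.image e
      · obtain ⟨x, hx, hex⟩ := Finset.mem_image.mp hrem
        refine Or.inr (Or.inr ⟨{x, (e x).1, (e x).2}, Finset.mem_image.mpr ⟨x, hx, rfl⟩, ?_⟩)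
        subst hex
        rcases hm with rfl | rfl
        · simp
        · simp
      · have hp1 : p ∈ P1 := Finset.mem_sdiff.mpr ⟨hp, hrem⟩
        exact Or.inr (Or.inl ⟨f p, Finset.mem_image.mpr ⟨p, hp1, rfl⟩, (hPmf v p).mpr hm⟩)
    · by_cases hvX : v ∈ X
      · exact Or.inr (Or.inr ⟨{v, (e v).1, (e v).2}, Finset.mem_image.mpr ⟨v, hvX, rfl⟩,
          Finset.mem_insert_self _ _⟩)
      · exact Or.inl ⟨hv, hvX⟩
  · -- neighbours of I1 are first coordinates
    intro x hx y hadjxy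
    by_cases hyc : y ∈ Cov P0
    · obtain ⟨p, hp, hm⟩ := hyc
      by_cases hrem : p ∈ X.image e
      · exfalso
        obtain ⟨x', hx', hex⟩ := Finset.mem_image.mp hrem
        obtain ⟨hp0', hxc', h1', h2', h12'⟩ := tri x' hx'
        rw [hex] at h1' h2'
        have hxeq : x = x' := by
          rcases hm with h | h
          · exact uniq p hp x' hxc' h1' h2' x hx.1 (Or.inl (h ▸ hadjxy))
          · exact uniq p hp x' hxc' h1' h2' x hx.1 (Or.inr (h ▸ hadjxy))
        rw [hxeq] at hx
        exact hx.2 hx'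
      · have hp1 : p ∈ P1 := Finset.mem_sdiff.mpr ⟨hp, hrem⟩
        rcases hm with h | h
        · by_cases hz : ∃ z, z ∈ I1 ∧ H.Adj z p.2
          · exfalso
            obtain ⟨z, hz1, hz2⟩ := hz
            exact KO p hp1 x hx z hz1 (h ▸ hadjxy) hz2
          · refine ⟨f p, Finset.mem_image.mpr ⟨p, hp1, rfl⟩, ?_⟩
            simp only [f, if_neg hz]
            exact h
        · have hz : ∃ z, z ∈ I1 ∧ H.Adj z p.2 := ⟨x, hx, h ▸ hadjxy⟩
          refine ⟨f p, Finset.mem_image.mpr ⟨p, hp1, rfl⟩, ?_⟩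
          simp only [f, if_pos hz]
          exact h
    · exact absurd hadjxy (fun hh => addC x y hx.1 hyc hh)


end MTDaux

/-- For every graph `H` there exist an independent set `I`, a matching `M`, and a family
`Γ` of pairwise vertex-disjoint triangles, all pairwise vertex-disjoint from each other,
covering `V(H)`, together with a partition `V(M) = V₁ ∪ V₂` such that every edge of `M`
has one endpoint in `V₁` and one in `V₂`, and every neighbour of every vertex of `I`
lies in `V₁`. -/
theorem exists_matching_triangle_decomposition {V : Type*} [Fintype V]
    (H : SimpleGraph V) :
    ∃ (I : Set V) (M : H.Subgraph) (Γ : Finset (Finset V)),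
      M.IsMatching ∧
      (∀ x ∈ I, ∀ y ∈ I, x ≠ y → ¬ H.Adj x y) ∧
      (∀ s ∈ Γ, s.card = 3 ∧ ∀ u ∈ s, ∀ v ∈ s, u ≠ v → H.Adj u v) ∧
      (∀ s ∈ Γ, ∀ s' ∈ Γ, s ≠ s' → Disjoint s s') ∧
      (∀ s ∈ Γ, Disjoint (↑s : Set V) M.verts ∧ Disjoint (↑s : Set V) I) ∧
      Disjoint I M.verts ∧
      I ∪ M.verts ∪ (⋃ s ∈ Γ, (↑s : Set V)) = Set.univ ∧
      ∃ V₁ V₂ : Set V,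
        V₁ ∪ V₂ = M.verts ∧ Disjoint V₁ V₂ ∧
        (∀ u v, M.Adj u v → (u ∈ V₁ ∧ v ∈ V₂) ∨ (u ∈ V₂ ∧ v ∈ V₁)) ∧
        (∀ x ∈ I, ∀ y, H.Adj x y → y ∈ V₁) := by
  classical
  obtain ⟨I, P, Γ, hadj, hdisj, hindep, htri, htridisj, htriavoid, hIcov, hcover, hnb⟩ :=
    MTDaux.core H
  let M : H.Subgraph :=
    { verts := MTDaux.Cov P
      Adj := fun u v => ∃ p ∈ P, (u = p.1 ∧ v = p.2) ∨ (u = p.2 ∧ v = p.1)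
      adj_sub := by
        rintro u v ⟨p, hp, ⟨rfl, rfl⟩ | ⟨rfl, rfl⟩⟩
        · exact hadj p hp
        · exact (hadj p hp).symm
      edge_vert := by
        rintro u v ⟨p, hp, ⟨rfl, rfl⟩ | ⟨rfl, rfl⟩⟩
        · exact ⟨p, hp, Or.inl rfl⟩
        · exact ⟨p, hp, Or.inr rfl⟩
      symm := by
        constructor
        rintro u v ⟨p, hp, ⟨rfl, rfl⟩ | ⟨rfl, rfl⟩⟩
        · exact ⟨p, hp, Or.inr ⟨rfl, rfl⟩⟩
        · exact ⟨p, hp, Or.inl ⟨rfl, rfl⟩⟩ }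
  have hMverts : M.verts = MTDaux.Cov P := rfl
  have hMAdj : ∀ u v, M.Adj u v ↔ ∃ p ∈ P, (u = p.1 ∧ v = p.2) ∨ (u = p.2 ∧ v = p.1) :=
    fun u v => Iff.rfl
  have hMmatch : M.IsMatching := by
    intro v hv
    obtain ⟨p, hp, hm⟩ := hv
    have hne12 : p.1 ≠ p.2 := (hadj p hp).ne
    rcases hm with rfl | rfl
    · refine ⟨p.2, ⟨p, hp, Or.inl ⟨rfl, rfl⟩⟩, ?_⟩
      rintro w ⟨q, hq, hcase⟩
      have hmq : MTDaux.Pm p.1 q := by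
        rcases hcase with ⟨h, _⟩ | ⟨h, _⟩
        exacts [Or.inl h, Or.inr h]
      have hqp : q = p := by
        by_contra hqp
        exact hdisj q hq p hp hqp p.1 hmq (Or.inl rfl)
      subst hqp
      rcases hcase with ⟨_, h2⟩ | ⟨h1, _⟩
      · exact h2
      · exact absurd h1 hne12
    · refine ⟨p.1, ⟨p, hp, Or.inr ⟨rfl, rfl⟩⟩, ?_⟩
      rintro w ⟨q, hq, hcase⟩
      have hmq : MTDaux.Pm p.2 q := by
        rcases hcase with ⟨h, _⟩ | ⟨h, _⟩
        exacts [Or.inl h, Or.inr h]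
      have hqp : q = p := by
        by_contra hqp
        exact hdisj q hq p hp hqp p.2 hmq (Or.inr rfl)
      subst hqp
      rcases hcase with ⟨h1, _⟩ | ⟨_, h2⟩
      · exact absurd h1.symm hne12
      · exact h2
  refine ⟨I, M, Γ, hMmatch, hindep, htri, htridisj, ?_, ?_, ?_, ?_⟩
  · intro s hs
    constructor
    · rw [Set.disjoint_left]
      intro a ha hc
      exact (htriavoid s hs a (Finset.mem_coe.mp ha)).1 hc
    · rw [Set.disjoint_left]
      intro a ha hc
      exact (htriavoid s hs a (Finset.mem_coe.mp ha)).2 hc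
  · rw [Set.disjoint_left]
    intro a ha hc
    exact hIcov a ha hc
  · apply Set.eq_univ_iff_forall.mpr
    intro v
    rcases hcover v with h | h | ⟨s, hs, hv⟩
    · exact Or.inl (Or.inl h)
    · exact Or.inl (Or.inr h)
    · exact Or.inr (Set.mem_iUnion₂.mpr ⟨s, hs, Finset.mem_coe.mpr hv⟩)
  · refine ⟨{v | ∃ p ∈ P, v = p.1}, {v | ∃ p ∈ P, v = p.2}, ?_, ?_, ?_, ?_⟩
    · ext v
      constructor
      · rintro (⟨p, hp, rfl⟩ | ⟨p, hp, rfl⟩)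
        · exact ⟨p, hp, Or.inl rfl⟩
        · exact ⟨p, hp, Or.inr rfl⟩
      · rintro ⟨p, hp, h | h⟩
        · exact Or.inl ⟨p, hp, h⟩
        · exact Or.inr ⟨p, hp, h⟩
    · rw [Set.disjoint_left]
      rintro a ⟨p, hp, rfl⟩ ⟨q, hq, h⟩
      by_cases hpq : p = q
      · subst hpq
        exact (hadj p hp).ne h
      · exact hdisj p hp q hq hpq p.1 (Or.inl rfl) (Or.inr h)
    · rintro u v ⟨p, hp, ⟨rfl, rfl⟩ | ⟨rfl, rfl⟩⟩
      · exact Or.inl ⟨⟨p, hp, rfl⟩, ⟨p, hp, rfl⟩⟩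
      · exact Or.inr ⟨⟨p, hp, rfl⟩, ⟨p, hp, rfl⟩⟩
    · intro x hx y hadjxy
      exact hnb x hx y hadjxy
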